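/- Let X be an R-module such that every subquotient of X is stable for descending filtrations and stable for ascending filtrations. Suppose X = A⁰ ⊇ A¹ ⊇ ⋯ ⊇ Aⁿ = 0 and X = B⁰ ⊇ B¹ ⊇ ⋯ ⊇ Bᵐ = 0 are two finite chains of submodules such that every quotient Aⁱ/Aⁱ⁺¹ and every quotient Bⁱ/Bⁱ⁺¹ admits a (descending or ascending) ℤ-composition series with factors among (S_j). Then for every j ∈ J, the total multiplicity of S_j, i.e., the sum over the steps of the chain of the multiplicities of S_j in the chosen ℤ-composition series of the quotients, is the same for both chains. In particular the composition factors of X, counted with multiplicity, are independent of all choices. -/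

import Mathlib

/-- The subquotient `A/B` of an ambient module. -/
abbrev quotSub {R X : Type*} [Ring R] [AddCommGroup X] [Module R X]
    (A B : Submodule R X) : Type _ :=
  ↥A ⧸ B.comap A.subtype

/-- A module `Y` is *stable for descending filtrations*. -/
def StableDesc (R Y : Type*) [Ring R] [AddCommGroup Y] [Module R Y] : Prop :=
  ∀ C D : ℕ → Submodule R Y, C 0 = ⊤ → D 0 = ⊤ →
    (∀ i, C (i + 1) ≤ C i) → (∀ i, D (i + 1) ≤ D i) →
    (⨅ i, C i) = ⊥ → (⨅ i, D i) = ⊥ →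
    ∀ i, ∃ m, D m ≤ C i

/-- A module `Y` is *stable for ascending filtrations*. -/
def StableAsc (R Y : Type*) [Ring R] [AddCommGroup Y] [Module R Y] : Prop :=
  ∀ C D : ℕ → Submodule R Y, C 0 = ⊥ → D 0 = ⊥ →
    (∀ i, C i ≤ C (i + 1)) → (∀ i, D i ≤ D (i + 1)) →
    (⨆ i, C i) = ⊤ → (⨆ i, D i) = ⊤ →
    ∀ i, ∃ m, D i ≤ C m

/-- The `m`-th quotient of a chain `c`, read descending (`desc = true`, giving `c m / c (m+1)`)
or ascending (`desc = false`, giving `c (m+1) / c m`). -/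
abbrev stepQuot {R Y : Type*} [Ring R] [AddCommGroup Y] [Module R Y]
    (desc : Bool) (c : ℕ → Submodule R Y) (m : ℕ) : Type _ :=
  quotSub (c (if desc then m else m + 1)) (c (if desc then m + 1 else m))

/-- `c` is a (descending if `desc`, ascending otherwise) ℤ-composition series of `Y` with
factors among the family `S` and finite multiplicities. -/
def IsZCompSeries {R Y J : Type*} [Ring R] [AddCommGroup Y] [Module R Y]
    (S : J → Type*) [∀ j, AddCommGroup (S j)] [∀ j, Module R (S j)]
    (desc : Bool) (c : ℕ → Submodule R Y) : Prop :=
  (if desc then c 0 = ⊤ ∧ (∀ m, c (m + 1) ≤ c m) ∧ (⨅ m, c m) = ⊥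
    else c 0 = ⊥ ∧ (∀ m, c m ≤ c (m + 1)) ∧ (⨆ m, c m) = ⊤) ∧
  (∀ m, Subsingleton (stepQuot desc c m) ∨
    ∃ j, Nonempty (stepQuot desc c m ≃ₗ[R] S j)) ∧
  (∀ j, {m | Nonempty (stepQuot desc c m ≃ₗ[R] S j)}.Finite)

/-- The multiplicity of the simple factor `S j` in the series `c`. -/
noncomputable def multOf {R Y J : Type*} [Ring R] [AddCommGroup Y] [Module R Y]
    (S : J → Type*) [∀ j, AddCommGroup (S j)] [∀ j, Module R (S j)]
    (desc : Bool) (c : ℕ → Submodule R Y) (j : J) : ℕ :=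
  {m | Nonempty (stepQuot desc c m ≃ₗ[R] S j)}.ncard

section Aux

variable {R : Type*} [Ring R] {J : Type*} (S : J → Type*)
  [∀ j, AddCommGroup (S j)] [∀ j, Module R (S j)]

open Classical in
/-- Count of factors isomorphic to `S j` in a composition series of submodules. -/
noncomputable def cnt {Y : Type*} [AddCommGroup Y] [Module R Y]
    (s : CompositionSeries (Submodule R Y)) (j : J) : ℕ :=
  ∑ i : Fin s.length,
    if Nonempty (quotSub (s i.succ) (s i.castSucc) ≃ₗ[R] S j) then 1 else 0

open Classical in
lemma cnt_def {Y : Type*} [AddCommGroup Y] [Module R Y]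
    (s : CompositionSeries (Submodule R Y)) (j : J) :
    cnt S s j = ∑ i : Fin s.length,
      if Nonempty (quotSub (s i.succ) (s i.castSucc) ≃ₗ[R] S j) then 1 else 0 := rfl

lemma isMaximal_iff_covBy {Y : Type*} [AddCommGroup Y] [Module R Y]
    (a b : Submodule R Y) : JordanHolderLattice.IsMaximal a b ↔ a ⋖ b := Iff.rfl

lemma cnt_singleton {Y : Type*} [AddCommGroup Y] [Module R Y]
    (x : Submodule R Y) (j : J) : cnt S (RelSeries.singleton _ x) j = 0 := by
  simp [cnt_def]
  exact fun x => x.elim0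

open Classical in
lemma cnt_snoc {Y : Type*} [AddCommGroup Y] [Module R Y]
    (s : CompositionSeries (Submodule R Y)) (x : Submodule R Y)
    (h : JordanHolderLattice.IsMaximal s.last x) (j : J) :
    cnt S (s.snoc x h) j
      = cnt S s j + (if Nonempty (quotSub x s.last ≃ₗ[R] S j) then 1 else 0) := by
  have e0 : cnt S (s.snoc x h) j = ∑ i : Fin (s.length + 1),
      if Nonempty (quotSub ((s.snoc x h) i.succ) ((s.snoc x h) i.castSucc) ≃ₗ[R] S j)
      then 1 else 0 := rfl
  rw [e0, Fin.sum_univ_castSucc, cnt_def]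
  congr 1
  · refine Finset.sum_congr rfl fun i _ => ?_
    erw [Fin.succ_castSucc, RelSeries.snoc_castSucc, RelSeries.snoc_castSucc]
  · erw [Fin.succ_last, RelSeries.last_snoc', RelSeries.snoc_castSucc]
    rfl

open Classical in
lemma cnt_smash {Y : Type*} [AddCommGroup Y] [Module R Y]
    (s t : CompositionSeries (Submodule R Y)) (con : s.last = t.head) (j : J) :
    cnt S (s.smash t con) j = cnt S s j + cnt S t j := by
  have e0 : cnt S (s.smash t con) j = ∑ i : Fin (s.length + t.length),
      if Nonempty (quotSub ((s.smash t con) i.succ) ((s.smash t con) i.castSucc) ≃ₗ[R] S j)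
      then 1 else 0 := rfl
  rw [e0, Fin.sum_univ_add, cnt_def, cnt_def]
  congr 1
  · refine Finset.sum_congr rfl fun i _ => ?_
    rw [RelSeries.smash_succ_castAdd, RelSeries.smash_castAdd]
  · refine Finset.sum_congr rfl fun i _ => ?_
    rw [RelSeries.smash_succ_natAdd, RelSeries.smash_natAdd]

open Classical in
lemma cnt_eq_of_equivalent {Y : Type*} [AddCommGroup Y] [Module R Y]
    {s t : CompositionSeries (Submodule R Y)} (h : s.Equivalent t) (j : J) :
    cnt S s j = cnt S t j := by
  obtain ⟨e, he⟩ := h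
  rw [cnt_def, cnt_def, ← Equiv.sum_comp e
    (fun i => if Nonempty (quotSub (t i.succ) (t i.castSucc) ≃ₗ[R] S j) then 1 else 0)]
  refine Finset.sum_congr rfl fun i _ => ?_
  let f := JordanHolderLattice.Iso.linearEquiv (he i)
  refine if_congr ⟨fun ⟨g⟩ => ⟨f.symm.trans g⟩, fun ⟨g⟩ => ⟨(f : quotSub (s i.succ)
    (s i.castSucc) ≃ₗ[R] quotSub (t (e i).succ) (t (e i).castSucc)).trans g⟩⟩ rfl rfl

end Aux

section Aux2

variable {R : Type*} [Ring R]

lemma quotSub_subsingleton_iff {Y : Type*} [AddCommGroup Y] [Module R Y]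
    (A B : Submodule R Y) : Subsingleton (quotSub A B) ↔ A ≤ B := by
  rw [Submodule.Quotient.subsingleton_iff, Submodule.comap_subtype_eq_top]

/-- First-isomorphism style equivalence for comap along a surjection. -/
noncomputable def quotSubComapEquiv {Y Z : Type*} [AddCommGroup Y] [Module R Y]
    [AddCommGroup Z] [Module R Z] (π : Y →ₗ[R] Z) (hπ : Function.Surjective π)
    (W W' : Submodule R Z) (h : W ≤ W') :
    quotSub (W'.comap π) (W.comap π) ≃ₗ[R] quotSub W' W := by
  have hres : ∀ x ∈ W'.comap π, π x ∈ W' := fun x hx => hx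
  set g : ↥(W'.comap π) →ₗ[R] quotSub W' W :=
    (W.comap W'.subtype).mkQ.comp (π.restrict hres) with hg
  have hsurj : Function.Surjective g := by
    intro q
    obtain ⟨w', rfl⟩ := Submodule.mkQ_surjective _ q
    obtain ⟨y, hy⟩ := hπ w'.1
    refine ⟨⟨y, by simpa [Submodule.mem_comap, hy] using w'.2⟩, ?_⟩
    simp only [hg, LinearMap.comp_apply]
    congr 1
    exact Subtype.ext (by simpa [LinearMap.restrict_apply] using hy)
  have hker : LinearMap.ker g = (W.comap π).comap (W'.comap π).subtype := by
    ext x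
    simp [hg, LinearMap.mem_ker, Submodule.Quotient.mk_eq_zero, LinearMap.restrict_apply,
      Submodule.mem_comap]
  exact (Submodule.quotEquivOfEq _ _ hker.symm).trans (g.quotKerEquivOfSurjective hsurj)

/-- Equivalence for map along an injection. -/
noncomputable def quotSubMapEquiv {Y Z : Type*} [AddCommGroup Y] [Module R Y]
    [AddCommGroup Z] [Module R Z] (ι : Y →ₗ[R] Z) (hι : Function.Injective ι)
    (W W' : Submodule R Y) (h : W ≤ W') :
    quotSub (W'.map ι) (W.map ι) ≃ₗ[R] quotSub W' W := by
  have hres : ∀ x ∈ W', ι x ∈ W'.map ι := fun x hx => Submodule.mem_map_of_mem hx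
  set g : ↥W' →ₗ[R] quotSub (W'.map ι) (W.map ι) :=
    ((W.map ι).comap (W'.map ι).subtype).mkQ.comp (ι.restrict hres) with hg
  have hsurj : Function.Surjective g := by
    intro q
    obtain ⟨z, rfl⟩ := Submodule.mkQ_surjective _ q
    obtain ⟨y, hy, hyz⟩ := z.2
    refine ⟨⟨y, hy⟩, ?_⟩
    simp only [hg, LinearMap.comp_apply]
    congr 1
    exact Subtype.ext (by simpa [LinearMap.restrict_apply] using hyz)
  have hker : LinearMap.ker g = W.comap W'.subtype := by
    ext x
    simp only [hg, LinearMap.mem_ker, LinearMap.comp_apply, Submodule.mkQ_apply,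
      Submodule.Quotient.mk_eq_zero, Submodule.mem_comap, Submodule.coe_subtype,
      LinearMap.restrict_apply]
    constructor
    · rintro hx
      obtain ⟨y, hyW, hyx⟩ := hx
      rwa [← hι hyx]
    · intro hx
      exact ⟨x, hx, rfl⟩
  exact ((Submodule.quotEquivOfEq _ _ hker.symm).trans
    (g.quotKerEquivOfSurjective hsurj)).symm

end Aux2

section Aux3

variable {R : Type*} [Ring R] {J : Type*} (S : J → Type*)
  [∀ j, AddCommGroup (S j)] [∀ j, Module R (S j)]

open Classical in
lemma exists_lift_series {Y : Type*} [AddCommGroup Y] [Module R Y]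
    (A B : Submodule R Y) (hBA : B ≤ A)
    (s : CompositionSeries (Submodule R (quotSub A B)))
    (hh : s.head = ⊥) (hl : s.last = ⊤) :
    ∃ t : CompositionSeries (Submodule R Y), t.head = B ∧ t.last = A ∧
      ∀ j, cnt S t j = cnt S s j := by
  set p : Submodule R ↥A := B.comap A.subtype with hp
  set π : ↥A →ₗ[R] quotSub A B := p.mkQ with hπ
  have hπs : Function.Surjective π := Submodule.mkQ_surjective p
  set F : Submodule R (quotSub A B) → Submodule R Y :=
    fun W => (W.comap π).map A.subtype with hF
  have hFmono : ∀ {W W' : Submodule R (quotSub A B)}, W ≤ W' → F W ≤ F W' :=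
    fun hWW => Submodule.map_mono (Submodule.comap_mono hWW)
  have hFinj : Function.Injective F := by
    intro W W' hWW
    apply Submodule.comap_injective_of_surjective hπs
    exact Submodule.map_injective_of_injective A.injective_subtype hWW
  have hFequiv : ∀ (W W' : Submodule R (quotSub A B)), W ≤ W' →
      Nonempty (quotSub (F W') (F W) ≃ₗ[R] quotSub W' W) := fun W W' hWW =>
    ⟨(quotSubMapEquiv A.subtype A.injective_subtype _ _ (Submodule.comap_mono hWW)).trans
      (quotSubComapEquiv π hπs W W' hWW)⟩
  have hFcov : ∀ {W W' : Submodule R (quotSub A B)}, W ⋖ W' → F W ⋖ F W' := by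
    intro W W' hWW
    have hle : W ≤ W' := hWW.le
    have hlt : F W < F W' := lt_of_le_of_ne (hFmono hle) (fun hEq => hWW.lt.ne (hFinj hEq))
    rw [covBy_iff_quot_is_simple hlt.le]
    haveI : IsSimpleModule R (quotSub W' W) := (covBy_iff_quot_is_simple hle).mp hWW
    exact (hFequiv W W' hle).elim fun e => IsSimpleModule.congr e
  refine ⟨⟨s.length, fun i => F (s i), fun i => hFcov (s.step i)⟩, ?_, ?_, ?_⟩
  · show F (s 0) = B
    rw [show s 0 = s.head from rfl, hh, hF]
    simp only [Submodule.comap_bot, hπ, Submodule.ker_mkQ, hp]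
    rw [Submodule.map_comap_subtype]
    exact inf_eq_right.mpr hBA
  · show F (s (Fin.last s.length)) = A
    rw [show s (Fin.last s.length) = s.last from rfl, hl, hF]
    simp only [Submodule.comap_top, Submodule.map_top, Submodule.range_subtype]
  · intro j
    rw [cnt_def, cnt_def]
    refine Finset.sum_congr rfl fun i _ => ?_
    obtain ⟨e⟩ := hFequiv _ _ (s.step i).le
    exact if_congr ⟨fun ⟨g⟩ => ⟨e.symm.trans g⟩, fun ⟨g⟩ => ⟨e.trans g⟩⟩ rfl rfl

end Aux3

section Aux4

variable {R : Type*} [Ring R] {J : Type*} (S : J → Type*)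
  [∀ j, AddCommGroup (S j)] [∀ j, Module R (S j)]

lemma nontrivial_of_equiv_simple (hsimple : ∀ j, IsSimpleModule R (S j)) {j : J}
    {T : Type*} [AddCommGroup T] [Module R T] (h : Nonempty (T ≃ₗ[R] S j)) :
    Nontrivial T := by
  haveI := (hsimple j).nontrivial
  exact h.elim fun e => e.toEquiv.nontrivial

open Classical in
lemma exists_series_of_chain {Y : Type*} [AddCommGroup Y] [Module R Y]
    (hsimple : ∀ j, IsSimpleModule R (S j))
    (f : ℕ → Submodule R Y) (K : ℕ)
    (hstep : ∀ m, m < K → f m = f (m + 1) ∨ f m ⋖ f (m + 1)) :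
    ∃ s : CompositionSeries (Submodule R Y), s.head = f 0 ∧ s.last = f K ∧
      ∀ j, cnt S s j = ((Finset.range K).filter
        (fun m => Nonempty (quotSub (f (m + 1)) (f m) ≃ₗ[R] S j))).card := by
  induction K with
  | zero =>
    exact ⟨RelSeries.singleton _ (f 0), RelSeries.head_singleton _,
      RelSeries.last_singleton _, fun j => by simp [cnt_singleton]⟩
  | succ K ih =>
    obtain ⟨s, hh, hl, hcnt⟩ := ih (fun m hm => hstep m (hm.trans (Nat.lt_succ_self K)))
    have hKnotmem : K ∉ Finset.range K := by simp
    rcases hstep K (Nat.lt_succ_self K) with heq | hcov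
    · refine ⟨s, hh, by rw [hl, heq], fun j => ?_⟩
      have hne : ¬ Nonempty (quotSub (f (K + 1)) (f K) ≃ₗ[R] S j) := by
        intro hne
        haveI : Subsingleton (quotSub (f (K + 1)) (f K)) :=
          (quotSub_subsingleton_iff _ _).mpr heq.ge
        haveI := nontrivial_of_equiv_simple S hsimple hne
        exact not_subsingleton_iff_nontrivial.mpr this ‹_›
      rw [hcnt j, Finset.range_add_one, Finset.filter_insert, if_neg hne]
    · have hmax : JordanHolderLattice.IsMaximal s.last (f (K + 1)) := by
        rw [isMaximal_iff_covBy, hl]; exact hcov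
      refine ⟨s.snoc (f (K + 1)) hmax, by rw [RelSeries.head_snoc]; exact hh,
        RelSeries.last_snoc _ _ _, fun j => ?_⟩
      rw [cnt_snoc, hcnt j, Finset.range_add_one, Finset.filter_insert]
      rw [hl]
      split_ifs with hmem
      · rw [Finset.card_insert_of_notMem (fun hc => hKnotmem (Finset.mem_of_mem_filter _ hc))]
      · rw [Nat.add_zero]

end Aux4

section Aux5

variable {R : Type*} [Ring R] {J : Type*} (S : J → Type*)
  [∀ j, AddCommGroup (S j)] [∀ j, Module R (S j)]

open Classical in
lemma exists_series_of_ZComp {Y : Type*} [AddCommGroup Y] [Module R Y]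
    (hsimple : ∀ j, IsSimpleModule R (S j))
    (hsd : StableDesc R Y) (hsa : StableAsc R Y)
    (desc : Bool) (c : ℕ → Submodule R Y) (hc : IsZCompSeries S desc c) :
    ∃ s : CompositionSeries (Submodule R Y), s.head = ⊥ ∧ s.last = ⊤ ∧
      ∀ j, cnt S s j = multOf S desc c j := by
  obtain ⟨hbound, hquot, hfin⟩ := hc
  cases desc with
  | true =>
    simp only [if_true] at hbound
    obtain ⟨h0, hmono, hinf⟩ := hbound
    obtain ⟨K, hK⟩ := hsd (fun m => if m = 0 then ⊤ else ⊥) c rfl h0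
      (fun i => by simp) hmono
      (le_antisymm (iInf_le_of_le 1 (by simp)) bot_le) hinf 1
    have hcK : c K = ⊥ := le_bot_iff.mp (by simpa using hK)
    have hanti : Antitone c := antitone_nat_of_succ_le hmono
    have hbot : ∀ m, K ≤ m → c m = ⊥ := fun m hm => le_bot_iff.mp (hcK ▸ hanti hm)
    set f : ℕ → Submodule R Y := fun m => c (K - m) with hf
    have hstep : ∀ m, m < K → f m = f (m + 1) ∨ f m ⋖ f (m + 1) := by
      intro m hm
      have h1 : K - m = (K - (m + 1)) + 1 := by omega
      set m' := K - (m + 1) with hm'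
      rcases hquot m' with hsub | ⟨j, ⟨e⟩⟩
      · left
        simp only [hf, h1]
        exact le_antisymm (hmono m') ((quotSub_subsingleton_iff _ _).mp hsub)
      · right
        haveI := hsimple j
        have hsimp : IsSimpleModule R (quotSub (c m') (c (m' + 1))) :=
          IsSimpleModule.congr e
        have hcov : c (m' + 1) ⋖ c m' := (covBy_iff_quot_is_simple (hmono m')).mpr hsimp
        simp only [hf, h1]
        exact hcov
    obtain ⟨s, hh, hl, hcnt⟩ := exists_series_of_chain S hsimple f K hstep
    have hlast : s.last = ⊤ := by rw [hl, hf]; simp only [Nat.sub_self]; exact h0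
    have hhead : s.head = ⊥ := by rw [hh, hf]; simpa using hcK
    refine ⟨s, hhead, hlast, fun j => ?_⟩
    rw [hcnt j, multOf]
    have hPlt : ∀ m', Nonempty (stepQuot true c m' ≃ₗ[R] S j) → m' < K := by
      intro m' hne
      by_contra hge
      push_neg at hge
      haveI : Subsingleton (stepQuot true c m') :=
        (quotSub_subsingleton_iff (c m') (c (m' + 1))).mpr (by rw [hbot m' hge]; exact bot_le)
      haveI := nontrivial_of_equiv_simple S hsimple hne
      exact not_subsingleton_iff_nontrivial.mpr this ‹_›
    have hset : {m | Nonempty (stepQuot true c m ≃ₗ[R] S j)}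
        = ↑((Finset.range K).filter (fun m => Nonempty (stepQuot true c m ≃ₗ[R] S j))) := by
      ext m
      simp only [Set.mem_setOf_eq, Finset.coe_filter, Finset.mem_range, Set.mem_setOf_eq]
      exact ⟨fun h => ⟨hPlt m h, h⟩, fun h => h.2⟩
    rw [hset, Set.ncard_coe_finset]
    refine Finset.card_bij' (fun m _ => K - (m + 1)) (fun m _ => K - (m + 1)) ?_ ?_ ?_ ?_
    · intro m hm
      simp only [Finset.mem_filter, Finset.mem_range] at hm ⊢
      obtain ⟨hmK, hp⟩ := hm
      have h1 : K - m = (K - (m + 1)) + 1 := by omega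
      have hp' : Nonempty (quotSub (c (K - (m + 1))) (c (K - m)) ≃ₗ[R] S j) := hp
      refine ⟨by omega, ?_⟩
      show Nonempty (quotSub (c (K - (m + 1))) (c ((K - (m + 1)) + 1)) ≃ₗ[R] S j)
      rw [h1] at hp'
      exact hp'
    · intro m hm
      simp only [Finset.mem_filter, Finset.mem_range] at hm ⊢
      obtain ⟨hmK, hp⟩ := hm
      have h2 : K - (K - (m + 1)) = m + 1 := by omega
      have h3 : K - ((K - (m + 1)) + 1) = m := by omega
      refine ⟨by omega, ?_⟩
      show Nonempty (quotSub (c (K - ((K - (m + 1)) + 1))) (c (K - (K - (m + 1)))) ≃ₗ[R] S j)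
      rw [h3, h2]
      exact hp
    · intro m hm
      simp only [Finset.mem_filter, Finset.mem_range] at hm
      omega
    · intro m hm
      simp only [Finset.mem_filter, Finset.mem_range] at hm
      omega
  | false =>
    simp only [Bool.false_eq_true, if_false] at hbound
    obtain ⟨h0, hmono, hsup⟩ := hbound
    obtain ⟨K, hK⟩ := hsa c (fun m => if m = 0 then ⊥ else ⊤) h0 rfl hmono
      (fun i => by simp) hsup (top_unique (le_iSup_of_le 1 (by simp))) 1
    have hcK : c K = ⊤ := top_unique (by simpa using hK)
    have hmono' : Monotone c := monotone_nat_of_le_succ hmono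
    have htop : ∀ m, K ≤ m → c m = ⊤ := fun m hm => top_unique (hcK ▸ hmono' hm)
    have hstep : ∀ m, m < K → c m = c (m + 1) ∨ c m ⋖ c (m + 1) := by
      intro m _
      rcases hquot m with hsub | ⟨j, ⟨e⟩⟩
      · left
        exact le_antisymm (hmono m) ((quotSub_subsingleton_iff _ _).mp hsub)
      · right
        haveI := hsimple j
        exact (covBy_iff_quot_is_simple (hmono m)).mpr (IsSimpleModule.congr e)
    obtain ⟨s, hh, hl, hcnt⟩ := exists_series_of_chain S hsimple c K hstep
    refine ⟨s, by rw [hh]; exact h0, by rw [hl]; exact hcK, fun j => ?_⟩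
    rw [hcnt j, multOf]
    have hPlt : ∀ m, Nonempty (stepQuot false c m ≃ₗ[R] S j) → m < K := by
      intro m hne
      by_contra hge
      push_neg at hge
      haveI : Subsingleton (stepQuot false c m) :=
        (quotSub_subsingleton_iff (c (m + 1)) (c m)).mpr (htop m hge ▸ le_top)
      haveI := nontrivial_of_equiv_simple S hsimple hne
      exact not_subsingleton_iff_nontrivial.mpr this ‹_›
    have hset : {m | Nonempty (stepQuot false c m ≃ₗ[R] S j)}
        = ↑((Finset.range K).filter (fun m => Nonempty (stepQuot false c m ≃ₗ[R] S j))) := by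
      ext m
      simp only [Set.mem_setOf_eq, Finset.coe_filter, Finset.mem_range, Set.mem_setOf_eq]
      exact ⟨fun h => ⟨hPlt m h, h⟩, fun h => h.2⟩
    rw [hset, Set.ncard_coe_finset]
    exact congrArg Finset.card (Finset.filter_congr fun m _ => Iff.rfl)

end Aux5


section Filtration

variable {R : Type*} [Ring R] {J : Type*} (S : J → Type*)
  [∀ j, AddCommGroup (S j)] [∀ j, Module R (S j)]

lemma exists_series_of_filtration {X : Type*} [AddCommGroup X] [Module R X]
    (hsimple : ∀ j, IsSimpleModule R (S j))
    (hstable : ∀ A B : Submodule R X, B ≤ A →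
      StableDesc R (quotSub A B) ∧ StableAsc R (quotSub A B))
    (N : ℕ) (A : ℕ → Submodule R X)
    (hA0 : A 0 = ⊤) (hAdesc : ∀ i, i < N → A (i + 1) ≤ A i)
    (dA : ℕ → Bool) (cA : ∀ i : ℕ, ℕ → Submodule R (quotSub (A i) (A (i + 1))))
    (hcA : ∀ i, i < N → IsZCompSeries S (dA i) (cA i)) :
    ∃ t : CompositionSeries (Submodule R X), t.head = A N ∧ t.last = ⊤ ∧
      ∀ j, cnt S t j = ∑ i ∈ Finset.range N, multOf S (dA i) (cA i) j := by
  suffices h : ∀ k, k ≤ N → ∃ t : CompositionSeries (Submodule R X),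
      t.head = A k ∧ t.last = ⊤ ∧
      ∀ j, cnt S t j = ∑ i ∈ Finset.range k, multOf S (dA i) (cA i) j from h N le_rfl
  intro k
  induction k with
  | zero =>
    intro _
    exact ⟨RelSeries.singleton _ ⊤, by rw [RelSeries.head_singleton, hA0],
      RelSeries.last_singleton _, fun j => by simp [cnt_singleton]⟩
  | succ k ih =>
    intro hk
    obtain ⟨t, hth, htl, htc⟩ := ih (by omega)
    have hk' : k < N := by omega
    obtain ⟨hsd, hsa⟩ := hstable (A k) (A (k + 1)) (hAdesc k hk')
    obtain ⟨s, hsh, hsl, hsc⟩ :=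
      exists_series_of_ZComp S hsimple hsd hsa (dA k) (cA k) (hcA k hk')
    obtain ⟨u, huh, hul, huc⟩ :=
      exists_lift_series S (A k) (A (k + 1)) (hAdesc k hk') s hsh hsl
    refine ⟨u.smash t (by rw [hul, hth]), ?_, ?_, fun j => ?_⟩
    · rw [RelSeries.head_smash]; exact huh
    · rw [RelSeries.last_smash]; exact htl
    · rw [cnt_smash, huc j, hsc j, htc j, Finset.sum_range_succ]
      exact Nat.add_comm _ _

end Filtration

/-- Let `X` be an `R`-module whose subquotients are all stable for
descending and ascending filtrations, and let `(S_j)` be a family of pairwise non-isomorphic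
simple modules.  Given two finite chains `X = A⁰ ⊇ ⋯ ⊇ Aᴺ = 0` and `X = B⁰ ⊇ ⋯ ⊇ Bᴹ = 0`
such that each quotient admits a (descending or ascending) ℤ-composition series with factors
among the `S_j`, the total multiplicity of each `S_j` (summed over the steps) is the same for
both chains. -/
theorem statement19 {R : Type*} [Ring R] {X : Type*} [AddCommGroup X] [Module R X]
    {J : Type*} (S : J → Type*) [∀ j, AddCommGroup (S j)] [∀ j, Module R (S j)]
    (hsimple : ∀ j, IsSimpleModule R (S j))
    (hpair : ∀ j j', j ≠ j' → IsEmpty (S j ≃ₗ[R] S j'))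
    (hstable : ∀ A B : Submodule R X, B ≤ A →
      StableDesc R (quotSub A B) ∧ StableAsc R (quotSub A B))
    (N M : ℕ) (A B : ℕ → Submodule R X)
    (hA0 : A 0 = ⊤) (hAN : A N = ⊥) (hAdesc : ∀ i, i < N → A (i + 1) ≤ A i)
    (hB0 : B 0 = ⊤) (hBM : B M = ⊥) (hBdesc : ∀ i, i < M → B (i + 1) ≤ B i)
    (dA : ℕ → Bool) (cA : ∀ i : ℕ, ℕ → Submodule R (quotSub (A i) (A (i + 1))))
    (hcA : ∀ i, i < N → IsZCompSeries S (dA i) (cA i))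
    (dB : ℕ → Bool) (cB : ∀ i : ℕ, ℕ → Submodule R (quotSub (B i) (B (i + 1))))
    (hcB : ∀ i, i < M → IsZCompSeries S (dB i) (cB i)) :
    ∀ j, ∑ i ∈ Finset.range N, multOf S (dA i) (cA i) j
      = ∑ i ∈ Finset.range M, multOf S (dB i) (cB i) j := by
  obtain ⟨tA, hAh, hAl, hAc⟩ := exists_series_of_filtration S hsimple hstable N A hA0 hAdesc
    dA cA hcA
  obtain ⟨tB, hBh, hBl, hBc⟩ := exists_series_of_filtration S hsimple hstable M B hB0 hBdesc
    dB cB hcB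
  have hequiv : tA.Equivalent tB :=
    CompositionSeries.jordan_holder _ _
      ((hAh.trans hAN).trans (hBh.trans hBM).symm) (hAl.trans hBl.symm)
  intro j
  rw [← hAc j, ← hBc j]
  exact cnt_eq_of_equivalent S hequiv j
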